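/- Let p be an odd prime, let m ≥ 2 be an integer, let q = p^m, and let α ∈ F_q^× be a nonsquare. Then there exists u ∈ F_q^× such that for every integer r with 0 ≤ r ≤ (q-1)/2 and every β ∈ F_{q²} with β² = α (viewing F_q ⊆ F_{q²}), the image of the mod-p Legendre polynomial P̄_r in F_{q²}[X] does not vanish at u·β^{-1}. -/

import Mathlib

open Polynomial

/-- The mod-`p` reduction of the `r`-th Legendre polynomial
`P_r(X) = 2^{-r} · Σ_{k=0}^{⌊r/2⌋} (-1)^k · C(r,k) · C(2r-2k, r) · X^{r-2k}`,
defined directly over any field `E` (intended: of odd characteristic). -/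
noncomputable def legendreMod (E : Type*) [Field E] (r : ℕ) : E[X] :=
  C (((2 : E) ^ r)⁻¹) * ∑ k ∈ Finset.range (r / 2 + 1),
    C ((-1 : E) ^ k * (r.choose k : E) * (((2 * r - 2 * k).choose r : ℕ) : E)) * X ^ (r - 2 * k)

section Aux
open Finset
variable {p : ℕ} [Fact p.Prime] {E : Type*} [Field E] [CharP E p]

def legC (r k : ℕ) : ℕ := r.choose k * (2*r - 2*k).choose r

lemma lucasE (n k : ℕ) :
    (n.choose k : E) = ((n%p).choose (k%p) : E) * ((n/p).choose (k/p) : E) := by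
  rw [← Nat.cast_mul, (CharP.natCast_eq_natCast E p).mpr]
  exact Choose.choose_modEq_choose_mod_mul_choose_div_nat

lemma legC_zero {b j : ℕ} (h : 2*j > b) : legC b j = 0 := by
  unfold legC
  by_cases hj : j > b
  · rw [Nat.choose_eq_zero_of_lt hj, Nat.zero_mul]
  · rw [Nat.choose_eq_zero_of_lt (by omega : 2*b-2*j < b), Nat.mul_zero]

lemma div_le_half {a b k : ℕ} (hp : 0 < p) (hk : 2*k ≤ a*p + b) (hb : b < p) :
    2*(k/p) ≤ a := by
  set i := k/p with hi
  have hk' : p*i + k%p = k := Nat.div_add_mod k p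
  have h1 : (2*i)*p ≤ a*p + b := by
    calc (2*i)*p = 2*(p*i) := by ring
      _ ≤ 2*k := by omega
      _ ≤ a*p+b := hk
  have h2 : (2*i)*p < (a+1)*p := by
    have : (a+1)*p = a*p + p := by ring
    omega
  have := Nat.lt_of_mul_lt_mul_right h2
  omega

lemma legC_cast (a b k : ℕ) (hb : b < p) (hk : 2*k ≤ a*p + b) :
    (legC (a*p+b) k : E) = (legC a (k/p) : E) * (legC b (k%p) : E) := by
  have hp : 0 < p := (Fact.out : p.Prime).pos
  set i := k/p with hi
  set j := k%p with hj
  have hjp : j < p := Nat.mod_lt _ hp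
  have hk' : p*i + j = k := Nat.div_add_mod k p
  have hia : 2*i ≤ a := by
    have h1 : (2*i)*p ≤ a*p + b := by
      calc (2*i)*p = 2*(p*i) := by ring
        _ ≤ 2*k := by omega
        _ ≤ a*p+b := hk
    have h2 : (2*i)*p < (a+1)*p := by
      have : (a+1)*p = a*p + p := by ring
      omega
    have := Nat.lt_of_mul_lt_mul_right h2
    omega
  have hrm : (a*p+b) % p = b := by
    rw [Nat.add_comm, Nat.add_mul_mod_self_right, Nat.mod_eq_of_lt hb]
  have hrd : (a*p+b) / p = a := by
    rw [Nat.add_comm, Nat.add_mul_div_right _ _ hp, Nat.div_eq_of_lt hb]; omega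
  -- first factor via Lucas
  have hc1 : ((a*p+b).choose k : E) = (b.choose j : E) * (a.choose i : E) := by
    rw [lucasE (p := p), hrm, hrd]
  unfold legC
  push_cast
  rw [hc1]
  by_cases hjb : 2*j > b
  · -- degenerate: legC b j = 0 in ℕ or second factor vanishes
    by_cases hjb2 : j > b
    · rw [Nat.choose_eq_zero_of_lt hjb2]; push_cast; ring
    · -- b/2 < j ≤ b : 2b-2j < b < p
      have hlt : 2*b - 2*j < b := by omega
      have hjb' : j ≤ b := by omega
      have hN : 2*(a*p+b) - 2*k = (2*a-2*i)*p + (2*b-2*j) := by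
        have hk'' : (p:ℤ)*i + j = k := by exact_mod_cast hk'
        zify [hk, hia, hjb', (by omega : 2*k ≤ 2*(a*p+b)), (by omega : 2*i ≤ 2*a), (by omega : 2*j ≤ 2*b)]
        linear_combination (2:ℤ)*hk''
      have hNm : (2*(a*p+b) - 2*k) % p = 2*b-2*j := by
        rw [hN, Nat.add_comm, Nat.add_mul_mod_self_right, Nat.mod_eq_of_lt (by omega)]
      have hNd : (2*(a*p+b) - 2*k) / p = 2*a-2*i := by
        rw [hN, Nat.add_comm, Nat.add_mul_div_right _ _ hp, Nat.div_eq_of_lt (by omega)]; omega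
      rw [lucasE (p := p) (2*(a*p+b) - 2*k), hNm, hNd, hrm, hrd,
        Nat.choose_eq_zero_of_lt hlt]
      push_cast; ring
  · -- main case : 2*j ≤ b
    have hjb' : 2*j ≤ b := by omega
    have hN : 2*(a*p+b) - 2*k = (2*a-2*i)*p + (2*b-2*j) := by
      have hk'' : (p:ℤ)*i + j = k := by exact_mod_cast hk'
      zify [hk, hia, (by omega : j ≤ b), (by omega : 2*k ≤ 2*(a*p+b)), (by omega : 2*i ≤ 2*a), (by omega : 2*j ≤ 2*b)]
      linear_combination (2:ℤ)*hk''
    by_cases hsm : 2*b - 2*j < p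
    · have hNm : (2*(a*p+b) - 2*k) % p = 2*b-2*j := by
        rw [hN, Nat.add_comm, Nat.add_mul_mod_self_right, Nat.mod_eq_of_lt hsm]
      have hNd : (2*(a*p+b) - 2*k) / p = 2*a-2*i := by
        rw [hN, Nat.add_comm, Nat.add_mul_div_right _ _ hp, Nat.div_eq_of_lt hsm]; omega
      rw [lucasE (p := p) (2*(a*p+b) - 2*k), hNm, hNd, hrm, hrd]
      push_cast; ring
    · -- 2b-2j ≥ p : both sides vanish
      have hN' : 2*(a*p+b) - 2*k = (2*a-2*i+1)*p + (2*b-2*j-p) := by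
        have : (2*a-2*i+1)*p = (2*a-2*i)*p + p := by ring
        omega
      have hsm' : 2*b-2*j-p < p := by omega
      have hNm : (2*(a*p+b) - 2*k) % p = 2*b-2*j-p := by
        rw [hN', Nat.add_comm, Nat.add_mul_mod_self_right, Nat.mod_eq_of_lt hsm']
      have hNd : (2*(a*p+b) - 2*k) / p = 2*a-2*i+1 := by
        rw [hN', Nat.add_comm, Nat.add_mul_div_right _ _ hp, Nat.div_eq_of_lt hsm']; omega
      have h0L : ((2*(a*p+b) - 2*k).choose (a*p+b) : E) = 0 := by
        rw [lucasE (p := p), hNm, hrm, Nat.choose_eq_zero_of_lt (by omega : 2*b-2*j-p < b)]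
        push_cast; ring
      have h0R : ((2*b - 2*j).choose b : E) = 0 := by
        have hm2 : (2*b-2*j) % p = 2*b-2*j-p := by
          rw [Nat.mod_eq_sub_mod (by omega), Nat.mod_eq_of_lt hsm']
        rw [lucasE (p := p), hm2, Nat.mod_eq_of_lt hb, Nat.choose_eq_zero_of_lt (by omega : 2*b-2*j-p < b)]
        push_cast; ring
      rw [h0L, h0R]; ring

lemma eval_legendreMod' (r : ℕ) (z : E) :
    Polynomial.eval z (legendreMod E r) =
      ((2:E)^r)⁻¹ * ∑ k ∈ Finset.range (r/2+1), (-1:E)^k * (legC r k : E) * z^(r-2*k) := by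
  unfold legendreMod legC
  push_cast
  simp [eval_finset_sum, mul_assoc]

lemma natCast_pow_char (n : ℕ) : ((n:E))^p = n := by
  rw [← frobenius_def]; exact map_natCast (frobenius E p) n

lemma eval_legendre_mul (hodd : Odd p) (a b : ℕ) (hb : b < p) (z : E) :
    Polynomial.eval z (legendreMod E (a*p+b)) =
      Polynomial.eval (z^p) (legendreMod E a) * Polynomial.eval z (legendreMod E b) := by
  have hp : 0 < p := (Fact.out : p.Prime).pos
  rw [eval_legendreMod', eval_legendreMod', eval_legendreMod']
  have h2 : ((2:E)^(a*p+b))⁻¹ = ((2:E)^a)⁻¹ * ((2:E)^b)⁻¹ := by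
    have h3 : (2:E)^(a*p) = (2:E)^a := by
      have h4 : ((2:E)^a) = ((2^a : ℕ):E) := by push_cast; ring
      rw [pow_mul, h4, natCast_pow_char]
    rw [pow_add, h3, mul_inv]
  rw [h2]
  have hmain : ∑ k ∈ Finset.range ((a*p+b)/2+1), (-1:E)^k * (legC (a*p+b) k : E) * z^(a*p+b-2*k)
      = (∑ i ∈ Finset.range (a/2+1), (-1:E)^i * (legC a i : E) * (z^p)^(a-2*i)) *
        (∑ j ∈ Finset.range (b/2+1), (-1:E)^j * (legC b j : E) * z^(b-2*j)) := by
    have hple : 1 ≤ p := hp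
    set r := a*p+b with hr
    set A := Finset.range (a/2+1) with hA
    set B := Finset.range (b/2+1) with hB
    set f : ℕ → E := fun k => (-1:E)^k * (legC r k : E) * z^(r-2*k) with hf
    set φ : ℕ×ℕ → ℕ := fun x => p*x.1 + x.2 with hφ
    have hmem : ∀ x : ℕ×ℕ, x ∈ A ×ˢ B → 2*x.1 ≤ a ∧ 2*x.2 ≤ b := by
      intro x hx
      rw [Finset.mem_product, hA, hB, Finset.mem_range, Finset.mem_range] at hx
      constructor
      · have := Nat.lt_succ_iff.mp hx.1
        rw [Nat.le_div_iff_mul_le (by norm_num : 0 < 2)] at this; omega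
      · have := Nat.lt_succ_iff.mp hx.2
        rw [Nat.le_div_iff_mul_le (by norm_num : 0 < 2)] at this; omega
    have hsub : (A ×ˢ B).image φ ⊆ Finset.range (r/2+1) := by
      intro k hk
      obtain ⟨x, hx, hxk⟩ := Finset.mem_image.mp hk
      obtain ⟨h1, h2⟩ := hmem x hx
      rw [Finset.mem_range, Nat.lt_succ_iff, Nat.le_div_iff_mul_le (by norm_num : 0 < 2)]
      have : p*(2*x.1) ≤ p*a := Nat.mul_le_mul_left p h1
      calc k*2 = p*(2*x.1) + 2*x.2 := by rw [← hxk]; ring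
        _ ≤ p*a + b := by omega
        _ = a*p + b := by ring
    have hsum1 : ∑ k ∈ Finset.range (r/2+1), f k = ∑ k ∈ (A ×ˢ B).image φ, f k := by
      refine (Finset.sum_subset hsub ?_).symm
      intro k hk hk2
      have hkr : 2*k ≤ r := by
        rw [Finset.mem_range, Nat.lt_succ_iff, Nat.le_div_iff_mul_le (by norm_num : 0 < 2)] at hk
        omega
      have hima : 2*(k/p) ≤ a := div_le_half hp hkr hb
      have himb : 2*(k%p) > b := by
        by_contra hcon
        push_neg at hcon
        refine hk2 (Finset.mem_image.mpr ⟨(k/p, k%p), ?_, Nat.div_add_mod k p⟩)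
        rw [Finset.mem_product, hA, hB, Finset.mem_range, Finset.mem_range,
          Nat.lt_succ_iff, Nat.lt_succ_iff, Nat.le_div_iff_mul_le (by norm_num : 0 < 2),
          Nat.le_div_iff_mul_le (by norm_num : 0 < 2)]
        omega
      rw [hf]
      simp only []
      rw [legC_cast a b k hb hkr, legC_zero himb]
      push_cast; ring
    have hinj : Set.InjOn φ (A ×ˢ B : Finset (ℕ×ℕ)) := by
      intro x hx y hy hxy
      have hx2 := (hmem x hx).2
      have hy2 := (hmem y hy).2
      have hxp : x.2 < p := by omega
      have hyp : y.2 < p := by omega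
      simp only [hφ] at hxy
      have h1 : x.2 = y.2 := by
        have := congrArg (· % p) hxy
        simpa [Nat.mul_add_mod, Nat.mod_eq_of_lt hxp, Nat.mod_eq_of_lt hyp] using this
      have h2 : x.1 = y.1 := by
        have hp' : p ≠ 0 := by omega
        rw [h1] at hxy
        have := Nat.add_right_cancel hxy
        exact Nat.eq_of_mul_eq_mul_left hp this
      exact Prod.ext h2 h1
    have hsum2 : ∑ k ∈ (A ×ˢ B).image φ, f k = ∑ x ∈ A ×ˢ B, f (φ x) :=
      Finset.sum_image (fun x hx y hy => hinj hx hy)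
    have hterm : ∀ x ∈ A ×ˢ B, f (φ x) =
        ((-1:E)^x.1 * (legC a x.1 : E) * (z^p)^(a-2*x.1)) *
        ((-1:E)^x.2 * (legC b x.2 : E) * z^(b-2*x.2)) := by
      intro x hx
      obtain ⟨h1, h2⟩ := hmem x hx
      obtain ⟨i, j⟩ := x
      simp only at h1 h2 ⊢
      have hjp : j < p := by omega
      have hkd : (p*i+j)/p = i := by
        rw [Nat.add_comm, Nat.add_mul_div_left _ _ hp, Nat.div_eq_of_lt hjp]; omega
      have hkm : (p*i+j)%p = j := by
        rw [Nat.add_comm, Nat.mul_comm, Nat.add_mul_mod_self_right, Nat.mod_eq_of_lt hjp]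
      have hkr : 2*(p*i+j) ≤ r := by
        have : p*(2*i) ≤ p*a := Nat.mul_le_mul_left p h1
        calc 2*(p*i+j) = p*(2*i) + 2*j := by ring
          _ ≤ p*a + b := by omega
          _ = a*p+b := by ring
      have hkr2 : 2*(p*i+j) ≤ a*p+b := hkr
      have hexp : r - 2*(p*i+j) = p*(a-2*i) + (b-2*j) := by
        rw [hr]
        zify [hkr2, h1, h2]
        push_cast
        ring
      have hsign : (-1:E)^(p*i+j) = (-1:E)^i * (-1:E)^j := by
        rw [pow_add, pow_mul, hodd.neg_one_pow]
      rw [hf]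
      simp only [hφ]
      rw [legC_cast a b (p*i+j) hb hkr, hkd, hkm, hexp, hsign, pow_add,
        ← pow_mul]
      ring
    rw [Finset.sum_mul_sum, hsum1, hsum2, Finset.sum_congr rfl hterm]
    exact Finset.sum_product _ _ _
  rw [hmain]; ring

lemma choose_cast_ne_zero {n k : ℕ} (hn : n < p) (hk : k ≤ n) :
    ((n.choose k : ℕ) : E) ≠ 0 := by
  rw [Ne, CharP.cast_eq_zero_iff E p]
  intro hdvd
  have hfac := Nat.choose_mul_factorial_mul_factorial hk
  have hdf : p ∣ n.factorial := by
    rw [← hfac]; exact Dvd.dvd.mul_right (Dvd.dvd.mul_right hdvd _) _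
  have := (Nat.Prime.dvd_factorial (Fact.out : p.Prime)).mp hdf
  omega

lemma two_cast_ne_zero (hodd : Odd p) : (2:E) ≠ 0 := by
  have h2 : ((2:ℕ):E) ≠ 0 := by
    rw [Ne, CharP.cast_eq_zero_iff E p]
    intro hdvd
    have := Nat.le_of_dvd (by norm_num) hdvd
    have := (Fact.out : p.Prime).two_le
    rcases hodd with ⟨t, ht⟩; omega
  simpa using h2

lemma legendre_natDegree_le (r : ℕ) : (legendreMod E r).natDegree ≤ r := by
  unfold legendreMod
  refine le_trans (natDegree_C_mul_le _ _) ?_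
  apply Polynomial.natDegree_sum_le_of_forall_le
  intro k hk
  refine le_trans (natDegree_C_mul_le _ _) ?_
  simpa [natDegree_X_pow] using (Nat.sub_le r (2*k))

lemma legendre_ne_zero (hodd : Odd p) {j : ℕ} (hj : j < p) :
    (legendreMod E j) ≠ 0 := by
  have hp3 : 3 ≤ p := by
    have := (Fact.out : p.Prime).two_le
    rcases hodd with ⟨t, ht⟩; omega
  set h := (p-1)/2 with hh
  have hph : p - 1 = 2*h := by rcases hodd with ⟨t,ht⟩; omega
  set k0 := j - h with hk0
  have h2k0 : 2*k0 ≤ j := by omega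
  set e := j - 2*k0 with he
  have hdp : 2*j - 2*k0 < p := by omega
  have hjd : j ≤ 2*j - 2*k0 := by omega
  intro h0
  have hco := congrArg (fun q => Polynomial.coeff q e) h0
  simp only [coeff_zero] at hco
  unfold legendreMod at hco
  rw [coeff_C_mul, finset_sum_coeff] at hco
  rw [Finset.sum_eq_single k0 ?h1 ?h2] at hco
  case h1 =>
    intro k hk hne
    rw [Finset.mem_range, Nat.lt_succ_iff, Nat.le_div_iff_mul_le (by norm_num : 0 < 2)] at hk
    rw [coeff_C_mul, coeff_X_pow, if_neg (by omega)]
    ring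
  case h2 =>
    intro habs
    exfalso
    apply habs
    rw [Finset.mem_range, Nat.lt_succ_iff, Nat.le_div_iff_mul_le (by norm_num : 0 < 2)]
    omega
  rw [coeff_C_mul, coeff_X_pow, if_pos rfl, mul_one] at hco
  have c1 : ((j.choose k0 : ℕ) : E) ≠ 0 := choose_cast_ne_zero hj (by omega)
  have c2 : (((2*j-2*k0).choose j : ℕ) : E) ≠ 0 := choose_cast_ne_zero hdp hjd
  have c3 : (((2:E)^j)⁻¹ : E) ≠ 0 := inv_ne_zero (pow_ne_zero _ (two_cast_ne_zero hodd))
  have c4 : ((-1:E)^k0) ≠ 0 := pow_ne_zero _ (by norm_num)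
  exact (mul_ne_zero c3 (mul_ne_zero (mul_ne_zero c4 c1) c2)) hco

lemma legendre_eval_neg (r : ℕ) (z : E) :
    Polynomial.eval (-z) (legendreMod E r) = (-1)^r * Polynomial.eval z (legendreMod E r) := by
  rw [eval_legendreMod', eval_legendreMod']
  have : ∑ k ∈ Finset.range (r/2+1), (-1:E)^k * (legC r k : E) * (-z)^(r-2*k)
      = (-1)^r * ∑ k ∈ Finset.range (r/2+1), (-1:E)^k * (legC r k : E) * z^(r-2*k) := by
    rw [Finset.mul_sum]
    refine Finset.sum_congr rfl ?_
    intro k hk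
    rw [Finset.mem_range, Nat.lt_succ_iff, Nat.le_div_iff_mul_le (by norm_num : 0 < 2)] at hk
    have key : (-1:E)^(r-2*k) = (-1)^r := by
      calc (-1:E)^(r-2*k) = (-1:E)^(r-2*k) * ((-1:E)^2)^k := by
            rw [neg_one_sq, one_pow, mul_one]
        _ = (-1:E)^(r-2*k + 2*k) := by rw [← pow_mul, ← pow_add]
        _ = (-1:E)^r := by congr 1; omega
    rw [show ((-z):E)^(r-2*k) = (-1:E)^(r-2*k) * z^(r-2*k) from neg_pow z _, key]; ring
  rw [this]; ring

lemma legendre_digit (hodd : Odd p) :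
    ∀ n : ℕ, ∀ r : ℕ, ∀ z : E, r < p^n →
      Polynomial.eval z (legendreMod E r) = 0 →
      ∃ i < n, ∃ j < p, Polynomial.eval (z^(p^i)) (legendreMod E j) = 0 := by
  intro n
  induction n with
  | zero =>
    intro r z hr h0
    rw [pow_zero] at hr
    obtain rfl : r = 0 := by omega
    rw [eval_legendreMod'] at h0
    simp [legC] at h0
  | succ n ih =>
    intro r z hr h0
    have hp : 0 < p := (Fact.out : p.Prime).pos
    have hb : r % p < p := Nat.mod_lt _ hp
    have hdecomp : (r/p)*p + r%p = r := Nat.div_add_mod' r p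
    rw [← hdecomp, eval_legendre_mul hodd _ _ hb] at h0
    rcases mul_eq_zero.mp h0 with h|h
    · have hdiv : r/p < p^n := by
        rw [Nat.div_lt_iff_lt_mul hp, ← pow_succ]
        exact hr
      obtain ⟨i, hi, j, hj, hz⟩ := ih (r/p) (z^p) hdiv h
      refine ⟨i+1, by omega, j, hj, ?_⟩
      rw [pow_succ', pow_mul]
      exact hz
    · exact ⟨0, Nat.succ_pos n, r%p, hb, by simpa using h⟩

lemma pow_p_injective (i : ℕ) : Function.Injective (fun x : E => x^(p^i)) := by
  induction i with
  | zero => intro a b h; simpa using h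
  | succ i ih =>
    have hfr : Function.Injective (fun x : E => x^p) := by
      intro a b h
      apply frobenius_inj E p
      rwa [frobenius_def, frobenius_def]
    intro a b h
    apply ih
    apply hfr
    show (a^(p^i))^p = (b^(p^i))^p
    rw [← pow_mul, ← pow_mul, ← pow_succ]
    exact h

lemma count_bound (s : ℕ) : ∀ m : ℕ, 2 ≤ m → m*((s+3)*(s+2)) + 2 < 2*(s+3)^m := by
  refine Nat.le_induction ?_ ?_
  · nlinarith [sq_nonneg (s+3)]
  · intro n hn ih
    have hpn : (s+3)^2 ≤ (s+3)^n := Nat.pow_le_pow_right (by omega) hn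
    rw [pow_succ]
    nlinarith [ih, hpn]

end Aux

/-- For an odd prime `p`, `m ≥ 2`, `q = p^m`, and a nonsquare `α ∈ F_q^×`, there is a
`u ∈ F_q^×` such that for every `0 ≤ r ≤ (q-1)/2` and every square root `β ∈ F_{q²}` of `α`,
the mod-`p` Legendre polynomial `P̄_r` does not vanish at `u·β⁻¹`. -/
theorem exists_simultaneous_nonvanishing (p m : ℕ) [Fact p.Prime] (hodd : Odd p)
    (hm : 2 ≤ m)
    (F : Type*) [Field F] [Fintype F] (hF : Fintype.card F = p ^ m)
    (F2 : Type*) [Field F2] [Fintype F2] [Algebra F F2]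
    (hF2 : Fintype.card F2 = (p ^ m) ^ 2)
    (α : F) (hα : α ≠ 0) (hns : ¬ IsSquare α) :
    ∃ u : F, u ≠ 0 ∧ ∀ r : ℕ, r ≤ (p ^ m - 1) / 2 →
      ∀ β : F2, β ^ 2 = algebraMap F F2 α →
        Polynomial.eval (algebraMap F F2 u * β⁻¹) (legendreMod F2 r) ≠ 0 := by
  classical
  have hp2 : 2 ≤ p := (Fact.out : p.Prime).two_le
  have hp3 : 3 ≤ p := by rcases hodd with ⟨t, ht⟩; omega
  -- char of F2 is p
  haveI : CharP F2 p := by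
    haveI := ringChar.charP F2
    have hprime2 : (ringChar F2).Prime := CharP.char_is_prime F2 (ringChar F2)
    obtain ⟨n, hn1, hn2⟩ := FiniteField.card F2 (ringChar F2)
    have hdvd : ringChar F2 ∣ p ^ (2*m) := by
      rw [← pow_mul] at hF2
      rw [mul_comm] at hF2
      rw [← hF2, hn2]
      exact dvd_pow_self _ (by positivity)
    have : ringChar F2 = p :=
      (Nat.prime_dvd_prime_iff_eq hprime2 (Fact.out : p.Prime)).mp
        (hprime2.dvd_of_dvd_pow hdvd)
    exact this ▸ ringChar.charP F2
  have hinjF : Function.Injective (algebraMap F F2) := (algebraMap F F2).injective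
  set q := p ^ m with hq
  have hq1 : 1 ≤ q := Nat.one_le_pow _ _ (by omega)
  have hqodd : Odd q := hodd.pow
  -- construct β0
  set A := algebraMap F F2 α with hA
  have hA0 : A ≠ 0 := fun h => hα (hinjF (by rw [← hA, h, map_zero]))
  have hAq : A ^ (q - 1) = 1 := by
    rw [hA, ← map_pow, ← hF]
    rw [FiniteField.pow_card_sub_one_eq_one α hα, map_one]
  obtain ⟨s, hs⟩ := hqodd
  have hcard2' : Fintype.card F2 / 2 = (q - 1) * ((q+1)/2) := by
    have hq2 : Fintype.card F2 = q*q := by rw [hF2]; ring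
    have e1 : q*q = 4*(s*s) + 4*s + 1 := by rw [hs]; ring
    have e2 : (q-1)*((q+1)/2) = 2*(s*s) + 2*s := by
      have h1 : q - 1 = 2*s := by omega
      have h2 : (q+1)/2 = s+1 := by omega
      rw [h1, h2]; ring
    rw [hq2, e1, e2]
    generalize s*s = t
    omega
  have hsq : IsSquare A := by
    rw [FiniteField.isSquare_iff (by rw [ringChar.eq F2 p]; omega) hA0, hcard2',
      pow_mul, hAq, one_pow]
  obtain ⟨b0, hb0⟩ := hsq
  have hβ0 : b0 ^ 2 = A := by rw [sq, ← hb0]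
  have hβ0ne : b0 ≠ 0 := by
    intro h; apply hA0; rw [← hβ0, h]; ring
  -- bad set
  set S : ℕ × ℕ → Finset F := fun x =>
    Finset.univ.filter (fun u : F =>
      Polynomial.eval ((algebraMap F F2 u * b0⁻¹)^(p^x.1)) (legendreMod F2 x.2) = 0) with hS
  set B : Finset F := (Finset.range m ×ˢ Finset.range p).biUnion S with hB
  have hScard : ∀ x ∈ Finset.range m ×ˢ Finset.range p, (S x).card ≤ x.2 := by
    intro x hx
    have hjp : x.2 < p := (Finset.mem_product.mp hx).2 |> Finset.mem_range.mp
    have hne : legendreMod F2 x.2 ≠ 0 := legendre_ne_zero hodd hjp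
    calc (S x).card ≤ (legendreMod F2 x.2).roots.toFinset.card := by
          apply Finset.card_le_card_of_injOn
            (fun u => (algebraMap F F2 u * b0⁻¹)^(p^x.1))
          · intro u hu
            rw [hS] at hu
            simp only [Finset.coe_filter, Finset.mem_coe, Finset.mem_filter, Set.mem_setOf_eq] at hu
            rw [Finset.mem_coe, Multiset.mem_toFinset, Polynomial.mem_roots hne]
            exact hu.2
          · intro u1 _ u2 _ h12
            have := pow_p_injective (p := p) (E := F2) x.1 h12
            have h2 := mul_right_cancel₀ (inv_ne_zero hβ0ne) this
            exact hinjF h2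
      _ ≤ Multiset.card (legendreMod F2 x.2).roots := Multiset.toFinset_card_le _
      _ ≤ (legendreMod F2 x.2).natDegree := Polynomial.card_roots' _
      _ ≤ x.2 := legendre_natDegree_le _
  have hBcard2 : B.card * 2 ≤ m * (p * (p-1)) := by
    calc B.card * 2 ≤ (∑ x ∈ Finset.range m ×ˢ Finset.range p, (S x).card) * 2 :=
          Nat.mul_le_mul_right 2 (Finset.card_biUnion_le)
      _ ≤ (∑ x ∈ Finset.range m ×ˢ Finset.range p, x.2) * 2 := by
          apply Nat.mul_le_mul_right
          exact Finset.sum_le_sum hScard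
      _ = m * (p * (p-1)) := by
          rw [Finset.sum_product]
          simp only [Finset.sum_const, Finset.card_range, smul_eq_mul]
          rw [mul_comm (m * _) 2, ← mul_assoc, mul_comm 2 m, mul_assoc,
            mul_comm 2 _]
          rw [Finset.sum_range_id_mul_two]
  have hbound : m*(p*(p-1)) + 2 < 2*q := by
    obtain ⟨s', rfl⟩ : ∃ s', p = s'+3 := ⟨p - 3, by omega⟩
    have h1 : s' + 3 - 1 = s' + 2 := by omega
    rw [h1, hq]
    exact count_bound s' m hm
  have hBlt : B.card < q - 1 := by
    have hq9 : 9 ≤ q := by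
      calc 9 = 3^2 := by norm_num
        _ ≤ p^2 := Nat.pow_le_pow_left hp3 2
        _ ≤ p^m := Nat.pow_le_pow_right (by omega) hm
    omega
  -- pick u
  have hG : ((Finset.univ.erase (0:F)) \ B).Nonempty := by
    rw [← Finset.card_pos]
    have h1 : (Finset.univ.erase (0:F)).card = q - 1 := by
      rw [Finset.card_erase_of_mem (Finset.mem_univ 0), Finset.card_univ, hF]
    have := Finset.le_card_sdiff B (Finset.univ.erase (0:F))
    omega
  obtain ⟨u, hu⟩ := hG
  rw [Finset.mem_sdiff, Finset.mem_erase] at hu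
  obtain ⟨⟨hu0, -⟩, huB⟩ := hu
  refine ⟨u, hu0, ?_⟩
  intro r hr β hβ heval
  -- reduce to β0
  set z0 := algebraMap F F2 u * b0⁻¹ with hz0
  have hz0eval : Polynomial.eval z0 (legendreMod F2 r) = 0 := by
    have hcases : β = b0 ∨ β = -b0 := by
      have hfac : (β - b0) * (β + b0) = 0 := by
        have : β^2 = b0^2 := by rw [hβ, hβ0]
        linear_combination this
      rcases mul_eq_zero.mp hfac with h|h
      · left; exact sub_eq_zero.mp h
      · right; exact eq_neg_of_add_eq_zero_left h
    rcases hcases with rfl|rfl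
    · exact heval
    · rw [inv_neg, mul_neg, ← hz0, legendre_eval_neg] at heval
      rcases mul_eq_zero.mp heval with h|h
      · exact absurd h (pow_ne_zero _ (by norm_num))
      · exact h
  have hrq : r < p^m := by
    have : (q - 1)/2 ≤ q - 1 := Nat.div_le_self _ _
    rw [← hq]; omega
  obtain ⟨i, him, j, hjp, hzij⟩ := legendre_digit hodd m r z0 hrq hz0eval
  apply huB
  rw [hB, Finset.mem_biUnion]
  refine ⟨(i, j), Finset.mem_product.mpr ⟨Finset.mem_range.mpr him, Finset.mem_range.mpr hjp⟩, ?_⟩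
  rw [hS]
  simp only [Finset.mem_filter]
  exact ⟨Finset.mem_univ u, hzij⟩
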